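/- The penalised minimal cost F satisfies the Optimal Partitioning recursion: for all t ≥ 1, F(t) = min over 0 ≤ τ < t of [F(τ) + C(y_{τ+1:t}) + β], where F(0) = -β and F(t) is defined as the minimum over all k ≥ 0 and all changepoint vectors 0 = τ_0 < τ_1 < ⋯ < τ_k < τ_{k+1} = t of ∑_{j=0}^{k} [C(y_{τ_j+1:τ_{j+1}}) + β] - β. -/

import Mathlib

def Sg (C : ℕ → ℕ → ℝ) (β : ℝ) (t : ℕ) : Set ℝ :=
  {x : ℝ | ∃ (k : ℕ) (τ : Fin (k + 2) → ℕ), StrictMono τ ∧ τ 0 = 0 ∧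
    τ (Fin.last (k + 1)) = t ∧
    x = (∑ j : Fin (k + 1), (C (τ j.castSucc) (τ j.succ) + β)) - β}

lemma Sg_extend {C : ℕ → ℕ → ℝ} {β : ℝ} {s t : ℕ} {x : ℝ} (hst : s < t)
    (hx : x ∈ Sg C β s) : x + C s t + β ∈ Sg C β t := by
  obtain ⟨k, τ, hmono, h0, hlast, rfl⟩ := hx
  have hle : ∀ a : Fin (k + 2), τ a ≤ s := by
    intro a
    rw [← hlast]
    exact hmono.monotone (Fin.le_last a)
  refine ⟨k + 1, Fin.snoc τ t, ?_, ?_, ?_, ?_⟩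
  · intro a b hab
    rcases Fin.eq_castSucc_or_eq_last b with ⟨b', rfl⟩ | rfl
    · rcases Fin.eq_castSucc_or_eq_last a with ⟨a', rfl⟩ | rfl
      · simp only [Fin.snoc_castSucc]
        exact hmono (by exact_mod_cast hab)
      · exact absurd hab (by simp [Fin.lt_iff_val_lt_val])
    · rcases Fin.eq_castSucc_or_eq_last a with ⟨a', rfl⟩ | rfl
      · simp only [Fin.snoc_castSucc, Fin.snoc_last]
        exact lt_of_le_of_lt (hle a') hst
      · exact absurd hab (lt_irrefl _)
  · have e : (0 : Fin (k + 3)) = Fin.castSucc 0 := rfl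
    rw [e, Fin.snoc_castSucc, h0]
  · simp
  · have hsum : ∑ j : Fin (k + 2),
        (C ((Fin.snoc τ t : Fin (k + 3) → ℕ) j.castSucc) ((Fin.snoc τ t : Fin (k + 3) → ℕ) j.succ) + β)
        = (∑ j : Fin (k + 1), (C (τ j.castSucc) (τ j.succ) + β)) + (C s t + β) := by
      rw [Fin.sum_univ_castSucc]
      congr 1
      · apply Finset.sum_congr rfl
        intro j _
        simp [-Fin.castSucc_succ, Fin.succ_castSucc]
      · simp [Fin.succ_last, hlast]
    rw [hsum]
    ring

theorem optimal_partitioning_recursion (C : ℕ → ℕ → ℝ) (β : ℝ) (hβ : 0 < β) (F : ℕ → ℝ)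
    (hF0 : F 0 = -β)
    (hF : ∀ t : ℕ, 1 ≤ t →
      IsLeast {x : ℝ | ∃ (k : ℕ) (τ : Fin (k + 2) → ℕ), StrictMono τ ∧ τ 0 = 0 ∧
        τ (Fin.last (k + 1)) = t ∧
        x = (∑ j : Fin (k + 1), (C (τ j.castSucc) (τ j.succ) + β)) - β} (F t)) :
    ∀ t : ℕ, ∀ ht : 1 ≤ t,
      F t = (Finset.range t).inf' (Finset.nonempty_range_iff.mpr (by omega))
        (fun τ => F τ + C τ t + β) := by
  intro t ht
  obtain ⟨hmem, hlb⟩ := hF t ht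
  apply le_antisymm
  · apply Finset.le_inf'
    intro s hs
    rw [Finset.mem_range] at hs
    rcases Nat.eq_zero_or_pos s with rfl | hpos
    · have : C 0 t ∈ {x : ℝ | ∃ (k : ℕ) (τ : Fin (k + 2) → ℕ), StrictMono τ ∧ τ 0 = 0 ∧
          τ (Fin.last (k + 1)) = t ∧
          x = (∑ j : Fin (k + 1), (C (τ j.castSucc) (τ j.succ) + β)) - β} := by
        refine ⟨0, ![0, t], ?_, rfl, rfl, by simp⟩
        intro a b hab
        fin_cases a <;> fin_cases b <;> simp_all [Fin.lt_iff_val_lt_val] <;> omega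
      have := hlb this
      rw [hF0]
      linarith
    · obtain ⟨hmems, _⟩ := hF s hpos
      have h2 : F s + C s t + β ∈ Sg C β t := Sg_extend hs hmems
      exact hlb h2
  · obtain ⟨k, τ, hmono, h0, hlast, hx⟩ := hmem
    match k with
    | 0 =>
      have h01 : (0 : Fin 2) = Fin.castSucc 0 := rfl
      have hτ0 : τ 0 = 0 := h0
      have hτ1 : τ 1 = t := hlast
      have hxv : F t = C 0 t := by
        rw [hx, Fin.sum_univ_one]
        have e1 : τ (0 : Fin 1).castSucc = 0 := h0
        have e2 : τ (0 : Fin 1).succ = t := hlast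
        rw [e1, e2]
        ring
      have hmem0 : (0 : ℕ) ∈ Finset.range t := Finset.mem_range.mpr (by omega)
      calc (Finset.range t).inf' (Finset.nonempty_range_iff.mpr (by omega))
            (fun τ => F τ + C τ t + β) ≤ F 0 + C 0 t + β := Finset.inf'_le _ hmem0
        _ = F t := by rw [hF0, hxv]; ring
    | k + 1 =>
      set m := τ (Fin.last (k + 1)).castSucc with hm
      have hm0 : 0 < m := by
        rw [hm, ← h0]
        exact hmono (by simp [Fin.lt_iff_val_lt_val])
      have hmt : m < t := by
        rw [hm, ← hlast]
        exact hmono (Fin.castSucc_lt_last _)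
      -- truncated segmentation
      have hmemm : (∑ j : Fin (k + 1),
          (C (τ (Fin.castSucc j).castSucc) (τ (Fin.castSucc j).succ) + β)) - β ∈ Sg C β m := by
        exact ⟨k, fun j => τ j.castSucc, fun a b hab => hmono (by simpa using hab), by simpa using h0, rfl, by congr 1⟩
      obtain ⟨_, hlbm⟩ := hF m hm0
      have hFm := hlbm hmemm
      have hxv : F t = (∑ j : Fin (k + 1),
          (C (τ (Fin.castSucc j).castSucc) (τ (Fin.castSucc j).succ) + β)) - β + (C m t + β) := by
        rw [hx, Fin.sum_univ_castSucc]
        have h1 : τ (Fin.last (k + 1)).succ = t := by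
          rw [Fin.succ_last]; exact hlast
        rw [h1, ← hm]
        ring
      have hmemr : m ∈ Finset.range t := Finset.mem_range.mpr hmt
      calc (Finset.range t).inf' (Finset.nonempty_range_iff.mpr (by omega))
            (fun τ => F τ + C τ t + β) ≤ F m + C m t + β := Finset.inf'_le _ hmemr
        _ ≤ F t := by rw [hxv]; linarith
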